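/- Let a > 0 be a real number, let J be a standard normal random variable, let X = exp(2·J), and for t ∈ [0,1] define X(t) = (1−t)·X + t·a. Then there exists a constant C > 0, depending only on a, such that for every t ∈ [0,1] the total variation distance between the law of X(t) and the law of X(0) = X satisfies d_TV(X(t), X(0)) ≤ C·t. -/

import Mathlib

open MeasureTheory ProbabilityTheory Real Set
open scoped ENNReal NNReal

noncomputable section Aux

/-- lognormal density (of `exp (2 J)`, `J` std normal). -/
def lnpdf (y : ℝ) : ℝ :=
  if 0 < y then (2 * Real.sqrt (2 * π))⁻¹ * (Real.exp (-(Real.log y) ^ 2 / 8) * y⁻¹) else 0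

/-- its derivative -/
def lnpdf' (y : ℝ) : ℝ :=
  if 0 < y then (2 * Real.sqrt (2 * π))⁻¹ *
    (Real.exp (-(Real.log y) ^ 2 / 8) * (-(Real.log y / 4) * (y ^ 2)⁻¹ - (y ^ 2)⁻¹)) else 0

lemma c2_nonneg : (0:ℝ) ≤ (2 * Real.sqrt (2 * π))⁻¹ := by positivity

lemma c2_le_one : (2 * Real.sqrt (2 * π))⁻¹ ≤ 1 := by
  rw [inv_le_one_iff₀]
  right
  nlinarith [Real.sq_sqrt (by positivity : (0:ℝ) ≤ 2 * π), Real.sqrt_nonneg (2 * π), Real.pi_gt_three]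

lemma lnpdf_nonneg (y : ℝ) : 0 ≤ lnpdf y := by
  unfold lnpdf; split <;> positivity

lemma lnpdf_of_nonpos {y : ℝ} (hy : y ≤ 0) : lnpdf y = 0 := by
  unfold lnpdf; rw [if_neg (by linarith)]

lemma measurable_lnpdf : Measurable lnpdf := by
  unfold lnpdf
  exact Measurable.ite measurableSet_Ioi (by measurability) measurable_const

lemma lnpdf_eq {u : ℝ} (hu : 0 < u) :
    lnpdf u = (2 * Real.sqrt (2 * π))⁻¹ *
      Real.exp (-(Real.log u) ^ 2 / 8 - Real.log u) := by
  rw [lnpdf, if_pos hu, Real.exp_sub, Real.exp_log hu]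
  ring

lemma exp_le_exp11 {s q : ℝ} (hq1 : -9/4 ≤ q) (hq2 : q ≤ 9/4) :
    Real.exp (q * s - s ^ 2 / 8) ≤ Real.exp 11 := by
  rw [Real.exp_le_exp]
  nlinarith [sq_nonneg (s - 4 * q), sq_nonneg s, sq_nonneg q]

lemma lnpdf_le {u : ℝ} (hu : 0 < u) : lnpdf u ≤ Real.exp 11 := by
  rw [lnpdf_eq hu]
  calc (2 * Real.sqrt (2 * π))⁻¹ * Real.exp (-(Real.log u) ^ 2 / 8 - Real.log u)
      ≤ 1 * Real.exp (-(Real.log u) ^ 2 / 8 - Real.log u) := by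
        gcongr ?_ * _; exacts [c2_le_one]
    _ = Real.exp ((-1) * Real.log u - (Real.log u) ^ 2 / 8) := by ring_nf
    _ ≤ Real.exp 11 := exp_le_exp11 (by norm_num) (by norm_num)


lemma exp_log_sq {u : ℝ} (hu : 0 < u) : Real.exp (-(2 * Real.log u)) = (u ^ 2)⁻¹ := by
  rw [Real.exp_neg]
  congr 1
  rw [show (2:ℝ) * Real.log u = Real.log u + Real.log u by ring, Real.exp_add, Real.exp_log hu,
    sq]

lemma exp_log_cube {u : ℝ} (hu : 0 < u) : Real.exp (-(3 * Real.log u)) = (u ^ 3)⁻¹ := by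
  rw [Real.exp_neg]
  congr 1
  rw [show (3:ℝ) * Real.log u = Real.log u + Real.log u + Real.log u by ring, Real.exp_add,
    Real.exp_add, Real.exp_log hu]
  ring

lemma exp_log_four {u : ℝ} (hu : 0 < u) : Real.exp (-(4 * Real.log u)) = (u ^ 4)⁻¹ := by
  rw [Real.exp_neg]
  congr 1
  rw [show (4:ℝ) * Real.log u = Real.log u + Real.log u + (Real.log u + Real.log u) by ring,
    Real.exp_add, Real.exp_add, Real.exp_log hu]
  ring

lemma lnpdf_le_mul {u : ℝ} (hu : 0 < u) : lnpdf u ≤ Real.exp 11 * u := by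
  rw [lnpdf_eq hu]
  calc (2 * Real.sqrt (2 * π))⁻¹ * Real.exp (-(Real.log u) ^ 2 / 8 - Real.log u)
      ≤ 1 * Real.exp (-(Real.log u) ^ 2 / 8 - Real.log u) := by
        gcongr ?_ * _; exact c2_le_one
    _ = Real.exp ((-2) * Real.log u - (Real.log u) ^ 2 / 8) * Real.exp (Real.log u) := by
        rw [← Real.exp_add]; congr 1; ring
    _ ≤ Real.exp 11 * u := by
        rw [Real.exp_log hu]
        gcongr ?_ * _
        exact exp_le_exp11 (by norm_num) (by norm_num)

lemma lnpdf_le_cube {u : ℝ} (hu : 0 < u) : lnpdf u ≤ Real.exp 11 * (u ^ 3)⁻¹ := by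
  rw [lnpdf_eq hu]
  calc (2 * Real.sqrt (2 * π))⁻¹ * Real.exp (-(Real.log u) ^ 2 / 8 - Real.log u)
      ≤ 1 * Real.exp (-(Real.log u) ^ 2 / 8 - Real.log u) := by
        gcongr ?_ * _; exact c2_le_one
    _ = Real.exp (2 * Real.log u - (Real.log u) ^ 2 / 8) * Real.exp (-(3 * Real.log u)) := by
        rw [← Real.exp_add]; congr 1; ring
    _ ≤ Real.exp 11 * (u ^ 3)⁻¹ := by
        rw [exp_log_cube hu]
        gcongr ?_ * _
        exact exp_le_exp11 (by norm_num) (by norm_num)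

lemma abs_lnpdf'_bound {u : ℝ} (hu : 0 < u) :
    |lnpdf' u| ≤ Real.exp (-(Real.log u) ^ 2 / 8 + -(2 * Real.log u) + |Real.log u| / 4) := by
  rw [lnpdf', if_pos hu]
  set s := Real.log u with hs
  have h1 : (2 * Real.sqrt (2 * π))⁻¹ *
      (Real.exp (-s ^ 2 / 8) * (-(s / 4) * (u ^ 2)⁻¹ - (u ^ 2)⁻¹)) =
      -((2 * Real.sqrt (2 * π))⁻¹ * Real.exp (-s ^ 2 / 8) * (u ^ 2)⁻¹ * (s / 4 + 1)) := by ring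
  rw [h1, abs_neg, abs_mul,
    abs_of_nonneg (by positivity : (0:ℝ) ≤ (2 * Real.sqrt (2 * π))⁻¹ * Real.exp (-s ^ 2 / 8) * (u ^ 2)⁻¹)]
  have h2 : |s / 4 + 1| ≤ Real.exp (|s| / 4) := by
    calc |s / 4 + 1| ≤ |s / 4| + 1 := (abs_add_le _ _).trans (by norm_num)
      _ = |s| / 4 + 1 := by rw [abs_div]; norm_num
      _ ≤ Real.exp (|s| / 4) := by linarith [Real.add_one_le_exp (|s| / 4)]
  calc (2 * Real.sqrt (2 * π))⁻¹ * Real.exp (-s ^ 2 / 8) * (u ^ 2)⁻¹ * |s / 4 + 1|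
      ≤ Real.exp (-s ^ 2 / 8) * (u ^ 2)⁻¹ * Real.exp (|s| / 4) := by
        have hc := c2_le_one
        have h3 := abs_nonneg (s / 4 + 1)
        have h4 : (0:ℝ) < Real.exp (-s ^ 2 / 8) := Real.exp_pos _
        have h5 : (0:ℝ) < (u ^ 2)⁻¹ := by positivity
        have t1 : (2 * Real.sqrt (2 * π))⁻¹ * Real.exp (-s ^ 2 / 8) * (u ^ 2)⁻¹ ≤
            Real.exp (-s ^ 2 / 8) * (u ^ 2)⁻¹ := by nlinarith [mul_nonneg (sub_nonneg.2 hc) (mul_pos h4 h5).le]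
        exact mul_le_mul t1 h2 h3 (by positivity)
    _ = Real.exp (-s ^ 2 / 8) * Real.exp (-(2 * s)) * Real.exp (|s| / 4) := by
        rw [← exp_log_sq hu, hs]
    _ = Real.exp (-s ^ 2 / 8 + -(2 * s) + |s| / 4) := by
        rw [← Real.exp_add, ← Real.exp_add]

lemma abs_lnpdf'_le {u : ℝ} (hu : 0 < u) : |lnpdf' u| ≤ Real.exp 11 := by
  refine (abs_lnpdf'_bound hu).trans ?_
  set s := Real.log u
  rcases abs_cases s with ⟨h, _⟩ | ⟨h, _⟩
  · rw [show -s ^ 2 / 8 + -(2 * s) + |s| / 4 = (-7/4 : ℝ) * s - s ^ 2 / 8 by rw [h]; ring]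
    exact exp_le_exp11 (by norm_num) (by norm_num)
  · rw [show -s ^ 2 / 8 + -(2 * s) + |s| / 4 = (-9/4 : ℝ) * s - s ^ 2 / 8 by rw [h]; ring]
    exact exp_le_exp11 (by norm_num) (by norm_num)

lemma abs_lnpdf'_le_four {u : ℝ} (hu : 0 < u) : |lnpdf' u| ≤ Real.exp 11 * (u ^ 4)⁻¹ := by
  refine (abs_lnpdf'_bound hu).trans ?_
  set s := Real.log u with hs
  have h4 : Real.exp (-(4 * s)) = (u ^ 4)⁻¹ := exp_log_four hu
  rcases abs_cases s with ⟨h, _⟩ | ⟨h, _⟩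
  · calc Real.exp (-s ^ 2 / 8 + -(2 * s) + |s| / 4)
        = Real.exp ((9/4 : ℝ) * s - s ^ 2 / 8) * Real.exp (-(4 * s)) := by
          rw [← Real.exp_add]; congr 1; rw [h]; ring
      _ ≤ Real.exp 11 * (u ^ 4)⁻¹ := by
          rw [h4]; gcongr ?_ * _
          exact exp_le_exp11 (by norm_num) (by norm_num)
  · calc Real.exp (-s ^ 2 / 8 + -(2 * s) + |s| / 4)
        = Real.exp ((7/4 : ℝ) * s - s ^ 2 / 8) * Real.exp (-(4 * s)) := by
          rw [← Real.exp_add]; congr 1; rw [h]; ring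
      _ ≤ Real.exp 11 * (u ^ 4)⁻¹ := by
          rw [h4]; gcongr ?_ * _
          exact exp_le_exp11 (by norm_num) (by norm_num)

lemma hasDerivAt_lnpdf {u : ℝ} (hu : 0 < u) : HasDerivAt lnpdf (lnpdf' u) u := by
  have h1 : HasDerivAt Real.log u⁻¹ u := Real.hasDerivAt_log hu.ne'
  have h2 : HasDerivAt (fun v => -(Real.log v) ^ 2 / 8)
      (-(2 * Real.log u ^ 1 * u⁻¹) / 8) u := ((h1.pow 2).neg).div_const 8
  have h3 := h2.exp
  have h4 : HasDerivAt (fun v : ℝ => v⁻¹) (-(u ^ 2)⁻¹) u := hasDerivAt_inv hu.ne'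
  have h5 := ((h3.mul h4).const_mul ((2 * Real.sqrt (2 * π))⁻¹))
  have h6 : lnpdf =ᶠ[nhds u] fun v =>
      (2 * Real.sqrt (2 * π))⁻¹ * (Real.exp (-(Real.log v) ^ 2 / 8) * v⁻¹) := by
    filter_upwards [Ioi_mem_nhds hu] with v hv
    rw [lnpdf, if_pos (mem_Ioi.mp hv)]
  refine (h5.congr_of_eventuallyEq h6).congr_deriv ?_
  rw [lnpdf', if_pos hu]
  field_simp
  ring

end Aux

lemma lintegral_image_deriv {s : Set ℝ} {f f' : ℝ → ℝ} (hs : MeasurableSet s)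
    (hf' : ∀ x ∈ s, HasDerivWithinAt f (f' x) s x) (hf : Set.InjOn f s) (g : ℝ → ℝ≥0∞) :
    ∫⁻ x in f '' s, g x = ∫⁻ x in s, ENNReal.ofReal (|f' x|) * g (f x) := by
  simpa only [ContinuousLinearMap.det_toSpanSingleton] using
    lintegral_image_eq_lintegral_abs_det_fderiv_mul volume hs
      (fun x hx => (hf' x hx).hasFDerivWithinAt) hf g

lemma measurable_exp2 : Measurable fun x : ℝ => Real.exp (2 * x) :=
  Real.measurable_exp.comp (measurable_id.const_mul 2)

lemma lnpdf_mul_exp2 (x : ℝ) :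
    ENNReal.ofReal |Real.exp (2 * x) * 2| * ENNReal.ofReal (lnpdf (Real.exp (2 * x)))
      = gaussianPDF 0 1 x := by
  rw [← ENNReal.ofReal_mul (abs_nonneg _), gaussianPDF]
  congr 1
  rw [lnpdf, if_pos (Real.exp_pos _), Real.log_exp, gaussianPDFReal,
    abs_of_pos (by positivity)]
  push_cast
  rw [show (-(2 * x) ^ 2 / 8 : ℝ) = -(x - 0) ^ 2 / (2 * 1) by ring]
  have h := Real.exp_ne_zero (2 * x)
  field_simp

lemma map_exp2_apply {E : Set ℝ} (hE : MeasurableSet E) :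
    (gaussianReal 0 1).map (fun x => Real.exp (2 * x)) E
      = ∫⁻ y in E, ENNReal.ofReal (lnpdf y) := by
  rw [Measure.map_apply measurable_exp2 hE, gaussianReal_apply 0 one_ne_zero]
  set S := (fun x : ℝ => Real.exp (2 * x)) ⁻¹' E with hS
  have hSm : MeasurableSet S := measurable_exp2 hE
  have himg : (fun x : ℝ => Real.exp (2 * x)) '' S = Ioi 0 ∩ E := by
    ext y
    constructor
    · rintro ⟨x, hx, rfl⟩
      exact ⟨Real.exp_pos _, hx⟩
    · rintro ⟨hy, hyE⟩
      refine ⟨Real.log y / 2, ?_, ?_⟩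
      · show Real.exp (2 * (Real.log y / 2)) ∈ E
        rw [show (2:ℝ) * (Real.log y / 2) = Real.log y by ring, Real.exp_log hy]
        exact hyE
      · show Real.exp (2 * (Real.log y / 2)) = y
        rw [show (2:ℝ) * (Real.log y / 2) = Real.log y by ring, Real.exp_log hy]
  have hderiv : ∀ x ∈ S, HasDerivWithinAt (fun x => Real.exp (2 * x))
      (Real.exp (2 * x) * 2) S x := fun x _ => by
    simpa using (((hasDerivAt_id x).const_mul 2).exp).hasDerivWithinAt
  have hinj : Set.InjOn (fun x => Real.exp (2 * x)) S := fun x _ y _ h => by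
    have := Real.exp_eq_exp.mp h
    linarith
  have step1 : ∫⁻ y in E, ENNReal.ofReal (lnpdf y)
      = ∫⁻ y in Ioi 0 ∩ E, ENNReal.ofReal (lnpdf y) := by
    have hpt : ∀ y, ENNReal.ofReal (lnpdf y)
        = (Ioi 0).indicator (fun y => ENNReal.ofReal (lnpdf y)) y := by
      intro y
      by_cases hy : 0 < y
      · rw [Set.indicator_of_mem (mem_Ioi.mpr hy)]
      · rw [Set.indicator_of_notMem (by simpa using hy), lnpdf_of_nonpos (not_lt.mp hy),
          ENNReal.ofReal_zero]
    calc ∫⁻ y in E, ENNReal.ofReal (lnpdf y)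
        = ∫⁻ y in E, (Ioi 0).indicator (fun y => ENNReal.ofReal (lnpdf y)) y :=
          lintegral_congr fun y => hpt y
      _ = ∫⁻ y in Ioi 0 ∩ E, ENNReal.ofReal (lnpdf y) := by
          rw [lintegral_indicator measurableSet_Ioi,
            Measure.restrict_restrict measurableSet_Ioi]
  rw [step1, ← himg, lintegral_image_deriv hSm hderiv hinj]
  exact (lintegral_congr fun x => lnpdf_mul_exp2 x).symm

lemma map_affine_apply (a t : ℝ) (ht1 : t < 1) {E : Set ℝ} (hE : MeasurableSet E) :
    (gaussianReal 0 1).map (fun x => (1 - t) * Real.exp (2 * x) + t * a) E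
      = ∫⁻ y in E, ENNReal.ofReal ((1 - t)⁻¹ * lnpdf ((y - t * a) * (1 - t)⁻¹)) := by
  have h1t : (0:ℝ) < 1 - t := by linarith
  have hmaff : Measurable fun y : ℝ => (1 - t) * y + t * a := by fun_prop
  have hcomp : (fun x => (1 - t) * Real.exp (2 * x) + t * a)
      = (fun y => (1 - t) * y + t * a) ∘ (fun x : ℝ => Real.exp (2 * x)) := rfl
  rw [hcomp, ← Measure.map_map hmaff measurable_exp2, Measure.map_apply hmaff hE,
    map_exp2_apply (hmaff hE)]
  have himg : (fun y : ℝ => (y - t * a) * (1 - t)⁻¹) '' E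
      = (fun y => (1 - t) * y + t * a) ⁻¹' E := by
    ext z
    constructor
    · rintro ⟨y, hy, rfl⟩
      show (1 - t) * ((y - t * a) * (1 - t)⁻¹) + t * a ∈ E
      rw [show (1 - t) * ((y - t * a) * (1 - t)⁻¹) + t * a = y by field_simp; ring]
      exact hy
    · intro hz
      refine ⟨(1 - t) * z + t * a, hz, ?_⟩
      field_simp; ring
  have hderiv : ∀ y ∈ E, HasDerivWithinAt (fun y : ℝ => (y - t * a) * (1 - t)⁻¹)
      ((1 - t)⁻¹) E y := by
    intro y _
    simpa using (((hasDerivAt_id y).sub_const (t * a)).mul_const ((1 - t)⁻¹)).hasDerivWithinAt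
  have hinj : Set.InjOn (fun y : ℝ => (y - t * a) * (1 - t)⁻¹) E := by
    intro y1 _ y2 _ h
    have h2 := mul_right_cancel₀ (inv_ne_zero h1t.ne') h
    linarith [sub_left_inj.mp h2]
  rw [← himg, lintegral_image_deriv hE hderiv hinj]
  refine lintegral_congr fun y => ?_
  rw [abs_of_pos (inv_pos.mpr h1t),
    ← ENNReal.ofReal_mul (by positivity : (0:ℝ) ≤ (1 - t)⁻¹)]

/-- the dominating function -/
noncomputable def Ha (a : ℝ) (y : ℝ) : ℝ :=
  (Ioc 0 (a + 1)).indicator (fun _ => 2 * Real.exp 11 * (a + 2)) y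
  + (Ioi (a + 1)).indicator (fun y => 4 * Real.exp 11 * (((y - a) ^ 3)⁻¹)) y

lemma Ha_nonneg (a : ℝ) (ha : 0 < a) (y : ℝ) : 0 ≤ Ha a y := by
  refine add_nonneg (Set.indicator_nonneg (fun _ _ => by positivity) y)
    (Set.indicator_nonneg (fun u hu => ?_) y)
  have : (1:ℝ) < u - a := by have := mem_Ioi.mp hu; linarith
  positivity

lemma lnpdf_lip {x y C : ℝ} (hx : 0 < x) (hy : 0 < y)
    (hC : ∀ u ∈ uIcc x y, |lnpdf' u| ≤ C) : |lnpdf y - lnpdf x| ≤ C * |y - x| := by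
  have hs : Convex ℝ (uIcc x y) := convex_uIcc x y
  have hd : ∀ u ∈ uIcc x y, HasDerivWithinAt lnpdf (lnpdf' u) (uIcc x y) u := by
    intro u hu
    have hu0 : 0 < u := by
      rcases Set.mem_uIcc.mp hu with ⟨h, _⟩ | ⟨h, _⟩
      · exact lt_of_lt_of_le hx h
      · exact lt_of_lt_of_le hy h
    exact (hasDerivAt_lnpdf hu0).hasDerivWithinAt
  simpa [Real.norm_eq_abs] using
    hs.norm_image_sub_le_of_norm_hasDerivWithin_le hd
      (fun u hu => by simpa [Real.norm_eq_abs] using hC u hu)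
      Set.left_mem_uIcc Set.right_mem_uIcc

set_option maxHeartbeats 1000000 in
lemma key_pointwise (a : ℝ) (ha : 0 < a) (t : ℝ) (ht0 : 0 ≤ t) (ht : t ≤ 1/2) (y : ℝ) :
    |(1 - t)⁻¹ * lnpdf ((y - t * a) * (1 - t)⁻¹) - lnpdf y| ≤ t * Ha a y := by
  have h1t : (0:ℝ) < 1 - t := by linarith
  set K := Real.exp 11 with hK
  have hKpos : 0 < K := Real.exp_pos _
  set L : ℝ := (y - t * a) * (1 - t)⁻¹ with hL
  clear_value L
  have hinv1 : (1:ℝ) ≤ (1 - t)⁻¹ := by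
    rw [le_inv_comm₀] <;> linarith
  have hinv2 : (1 - t)⁻¹ ≤ 2 := by
    rw [inv_le_comm₀ h1t (by norm_num)]; linarith
  have hdiff : L - y = t * (y - a) * (1 - t)⁻¹ := by
    rw [hL]; field_simp; ring
  have habs : |L - y| ≤ 2 * t * |y - a| := by
    rw [hdiff, abs_mul, abs_mul, abs_of_nonneg ht0, abs_of_pos (inv_pos.mpr h1t)]
    nlinarith [mul_le_mul_of_nonneg_left hinv2 (mul_nonneg ht0 (abs_nonneg (y - a)))]
  by_cases hy0 : 0 < y
  swap
  · -- y ≤ 0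
    push_neg at hy0
    have hLle : L ≤ 0 := by
      rw [hL]
      exact mul_nonpos_of_nonpos_of_nonneg (by nlinarith) (by positivity)
    rw [lnpdf_of_nonpos hLle, lnpdf_of_nonpos hy0]
    have hHa : Ha a y = 0 := by
      rw [Ha, Set.indicator_of_notMem (by simp [Set.mem_Ioc]; intro h; linarith),
        Set.indicator_of_notMem (by simp [Set.mem_Ioi]; linarith)]
      norm_num
    rw [hHa]
    simp
  · by_cases hya : y ≤ a + 1
    · -- 0 < y ≤ a + 1
      have hHa : Ha a y = 2 * K * (a + 2) := by
        rw [Ha, Set.indicator_of_mem (Set.mem_Ioc.mpr ⟨hy0, hya⟩),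
          Set.indicator_of_notMem (by simp [Set.mem_Ioi]; linarith)]
        norm_num [hK]
      have hyabs : |y - a| ≤ a + 1 := by
        rw [abs_le]; constructor <;> linarith
      by_cases hyta : y ≤ t * a
      · -- lower tail : L ≤ 0
        have hLle : L ≤ 0 := by
          rw [hL]
          exact mul_nonpos_of_nonpos_of_nonneg (by linarith) (by positivity)
        rw [lnpdf_of_nonpos hLle, hHa]
        rw [mul_zero, zero_sub, abs_neg, abs_of_nonneg (lnpdf_nonneg y)]
        have h1 : lnpdf y ≤ K * y := lnpdf_le_mul hy0
        nlinarith
      · -- main region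
        push_neg at hyta
        have hLpos : 0 < L := by
          rw [hL]
          exact mul_pos (by linarith) (inv_pos.mpr h1t)
        have hT1 : |(1 - t)⁻¹ * lnpdf L - lnpdf L| ≤ 2 * t * K := by
          rw [show (1 - t)⁻¹ * lnpdf L - lnpdf L = ((1 - t)⁻¹ - 1) * lnpdf L by ring,
            abs_of_nonneg (mul_nonneg (by linarith) (lnpdf_nonneg L))]
          have hfac : (1 - t)⁻¹ - 1 ≤ 2 * t := by
            have : (1 - t)⁻¹ - 1 = t * (1 - t)⁻¹ := by field_simp; ring
            rw [this]; nlinarith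
          nlinarith [lnpdf_le hLpos, lnpdf_nonneg L]
        have hT2 : |lnpdf L - lnpdf y| ≤ K * (2 * t * (a + 1)) := by
          have hlip := lnpdf_lip hLpos hy0 (fun u _ => abs_lnpdf'_le (by
            rcases Set.mem_uIcc.mp ‹u ∈ uIcc L y› with ⟨h, _⟩ | ⟨h, _⟩
            · exact lt_of_lt_of_le hLpos h
            · exact lt_of_lt_of_le hy0 h))
          rw [abs_sub_comm] at hlip
          refine hlip.trans ?_
          have : |y - L| ≤ 2 * t * (a + 1) := by
            rw [abs_sub_comm]
            exact habs.trans (by nlinarith [abs_nonneg (y - a)])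
          nlinarith [abs_nonneg (y - L)]
        calc |(1 - t)⁻¹ * lnpdf L - lnpdf y|
            ≤ |(1 - t)⁻¹ * lnpdf L - lnpdf L| + |lnpdf L - lnpdf y| := abs_sub_le _ _ _
          _ ≤ 2 * t * K + K * (2 * t * (a + 1)) := add_le_add hT1 hT2
          _ ≤ t * Ha a y := by rw [hHa]; nlinarith
    · -- y > a + 1
      push_neg at hya
      have hya1 : (1:ℝ) < y - a := by linarith
      have hHa : Ha a y = 4 * K * (((y - a) ^ 3)⁻¹) := by
        rw [Ha, Set.indicator_of_notMem (by simp [Set.mem_Ioc]; intro h; linarith),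
          Set.indicator_of_mem (Set.mem_Ioi.mpr hya)]
        norm_num [hK]
      have hLge : y - a ≤ L := by
        have heq : L - (y - a) = (t * y + a * (1 - 2 * t)) * (1 - t)⁻¹ := by
          rw [hL]; field_simp; ring
        nlinarith [mul_nonneg (by nlinarith : (0:ℝ) ≤ t * y + a * (1 - 2 * t))
          (inv_pos.mpr h1t).le]
      have hLpos : 0 < L := lt_of_lt_of_le (by linarith) hLge
      have hpow3 : (L ^ 3)⁻¹ ≤ ((y - a) ^ 3)⁻¹ := by
        have h1 : (0:ℝ) < (y - a) ^ 3 := by positivity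
        have h2 : (y - a) ^ 3 ≤ L ^ 3 := pow_le_pow_left₀ (by linarith) hLge 3
        exact inv_anti₀ h1 h2
      have hT1 : |(1 - t)⁻¹ * lnpdf L - lnpdf L| ≤ 2 * t * (K * ((y - a) ^ 3)⁻¹) := by
        rw [show (1 - t)⁻¹ * lnpdf L - lnpdf L = ((1 - t)⁻¹ - 1) * lnpdf L by ring,
          abs_of_nonneg (mul_nonneg (by linarith) (lnpdf_nonneg L))]
        have hfac : (1 - t)⁻¹ - 1 ≤ 2 * t := by
          have h2 : (1 - t)⁻¹ - 1 = t * (1 - t)⁻¹ := by field_simp; ring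
          rw [h2]; nlinarith
        have hcube : lnpdf L ≤ K * ((y - a) ^ 3)⁻¹ := by
          refine (lnpdf_le_cube hLpos).trans ?_
          exact mul_le_mul_of_nonneg_left hpow3 hKpos.le
        nlinarith [lnpdf_nonneg L, mul_nonneg (mul_nonneg (by norm_num : (0:ℝ) ≤ 2) ht0)
          (mul_nonneg hKpos.le (by positivity : (0:ℝ) ≤ ((y - a) ^ 3)⁻¹))]
      have hbound4 : ∀ u ∈ uIcc L y, |lnpdf' u| ≤ K * ((y - a) ^ 4)⁻¹ := by
        intro u hu
        have hule : y - a ≤ u := by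
          rcases Set.mem_uIcc.mp hu with ⟨h, _⟩ | ⟨h, _⟩
          · linarith
          · linarith
        have hupos : 0 < u := by linarith
        refine (abs_lnpdf'_le_four hupos).trans ?_
        refine mul_le_mul_of_nonneg_left (inv_anti₀ (by positivity) ?_) hKpos.le
        exact pow_le_pow_left₀ (by linarith) hule 4
      have hT2 : |lnpdf L - lnpdf y| ≤ 2 * t * (K * ((y - a) ^ 3)⁻¹) := by
        have hlip := lnpdf_lip hLpos hy0 hbound4
        rw [abs_sub_comm] at hlip
        refine hlip.trans ?_
        have hyl : |y - L| ≤ 2 * t * (y - a) := by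
          rw [abs_sub_comm]
          refine habs.trans ?_
          rw [abs_of_nonneg (by linarith : (0:ℝ) ≤ y - a)]
        have h4 : K * ((y - a) ^ 4)⁻¹ * (2 * t * (y - a)) = 2 * t * (K * ((y - a) ^ 3)⁻¹) := by
          field_simp
        calc K * ((y - a) ^ 4)⁻¹ * |y - L| ≤ K * ((y - a) ^ 4)⁻¹ * (2 * t * (y - a)) :=
              mul_le_mul_of_nonneg_left hyl (by positivity)
          _ = 2 * t * (K * ((y - a) ^ 3)⁻¹) := h4
      calc |(1 - t)⁻¹ * lnpdf L - lnpdf y|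
          ≤ |(1 - t)⁻¹ * lnpdf L - lnpdf L| + |lnpdf L - lnpdf y| := abs_sub_le _ _ _
        _ ≤ 2 * t * (K * ((y - a) ^ 3)⁻¹) + 2 * t * (K * ((y - a) ^ 3)⁻¹) :=
            add_le_add hT1 hT2
        _ = t * (4 * K * (((y - a) ^ 3)⁻¹)) := by ring
        _ = t * Ha a y := by rw [hHa]

lemma integrable_Ha (a : ℝ) (ha : 0 < a) : Integrable (Ha a) := by
  unfold Ha
  apply Integrable.add
  · rw [integrable_indicator_iff measurableSet_Ioc]
    exact integrableOn_const measure_Ioc_lt_top.ne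
  · rw [integrable_indicator_iff measurableSet_Ioi]
    have h1 : IntegrableOn (fun x : ℝ => x ^ (-3 : ℝ)) (Ioi 1) :=
      integrableOn_Ioi_rpow_of_lt (by norm_num) one_pos
    have h1' : Integrable ((Ioi (1:ℝ)).indicator fun x => x ^ (-3 : ℝ)) :=
      (integrable_indicator_iff measurableSet_Ioi).mpr h1
    have h3 : Integrable fun y : ℝ => (Ioi (1:ℝ)).indicator (fun x => x ^ (-3 : ℝ)) (y - a) :=
      h1'.comp_sub_right a
    refine ((h3.const_mul (4 * Real.exp 11)).integrableOn).congr_fun ?_ measurableSet_Ioi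
    intro y hy
    have hy1 : (1:ℝ) < y - a := by have := mem_Ioi.mp hy; linarith
    show 4 * Real.exp 11 * (Ioi 1).indicator (fun x => x ^ (-3:ℝ)) (y - a)
      = 4 * Real.exp 11 * ((y - a) ^ 3)⁻¹
    rw [Set.indicator_of_mem (mem_Ioi.mpr hy1)]
    rw [show (-3:ℝ) = -((3:ℕ):ℝ) by norm_num, Real.rpow_neg (by linarith), Real.rpow_natCast]

/-- Total variation distance between two measures: the supremum over measurable sets
of the absolute difference of the measures. -/
noncomputable def dTV {Ω : Type*} [MeasurableSpace Ω] (μ ν : Measure Ω) : ℝ :=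
  ⨆ E : {E : Set Ω // MeasurableSet E}, |(μ E.1).toReal - (ν E.1).toReal|

set_option maxHeartbeats 1000000 in
/-- Lemma 3.2: for `X = exp(2J)` with `J` standard normal and `X(t) = (1-t)X + ta`
with `a > 0`, the total variation distance between the laws of `X(t)` and `X(0)`
is at most `C·t` for a constant `C` depending only on `a`. -/
theorem stmt11 (a : ℝ) (ha : 0 < a) :
    ∃ C > (0 : ℝ), ∀ t : ℝ, 0 ≤ t → t ≤ 1 →
      dTV ((gaussianReal 0 1).map (fun x => (1 - t) * Real.exp (2 * x) + t * a))
          ((gaussianReal 0 1).map (fun x => Real.exp (2 * x))) ≤ C * t := by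
  classical
  have hint := integrable_Ha a ha
  set IH := ∫ y, Ha a y with hIH
  have hIH0 : 0 ≤ IH := integral_nonneg fun y => Ha_nonneg a ha y
  refine ⟨IH + 2, by positivity, ?_⟩
  intro t ht0 ht1
  have hmt : Measurable fun x : ℝ => (1 - t) * Real.exp (2 * x) + t * a := by
    exact (measurable_exp2.const_mul _).add_const _
  set μt := (gaussianReal 0 1).map (fun x => (1 - t) * Real.exp (2 * x) + t * a) with hμt
  set μ0 := (gaussianReal 0 1).map (fun x => Real.exp (2 * x)) with hμ0
  haveI i1 : IsProbabilityMeasure μt := Measure.isProbabilityMeasure_map hmt.aemeasurable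
  haveI i2 : IsProbabilityMeasure μ0 := Measure.isProbabilityMeasure_map measurable_exp2.aemeasurable
  haveI : Nonempty {E : Set ℝ // MeasurableSet E} := ⟨⟨∅, MeasurableSet.empty⟩⟩
  unfold dTV
  refine ciSup_le fun E => ?_
  by_cases hhalf : t ≤ 1/2
  · -- density estimate regime
    have hE : MeasurableSet E.1 := E.2
    have hA : μ0 E.1 = ∫⁻ y in E.1, ENNReal.ofReal (lnpdf y) := map_exp2_apply hE
    have hB : μt E.1 = ∫⁻ y in E.1,
        ENNReal.ofReal ((1 - t)⁻¹ * lnpdf ((y - t * a) * (1 - t)⁻¹)) :=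
      map_affine_apply a t (by linarith) hE
    have hkey := fun y => abs_le.mp (key_pointwise a ha t ht0 hhalf y)
    have hHnn : ∀ y, 0 ≤ t * Ha a y := fun y => mul_nonneg ht0 (Ha_nonneg a ha y)
    have hTint : ∫⁻ y, ENNReal.ofReal (t * Ha a y) = ENNReal.ofReal (t * IH) := by
      rw [← ofReal_integral_eq_lintegral_ofReal (hint.const_mul t)
        (ae_of_all _ hHnn), integral_const_mul]
    have hmeasF : Measurable fun y => ENNReal.ofReal (lnpdf y) :=
      measurable_lnpdf.ennreal_ofReal
    have hmeasG : Measurable fun y =>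
        ENNReal.ofReal ((1 - t)⁻¹ * lnpdf ((y - t * a) * (1 - t)⁻¹)) := by
      refine Measurable.ennreal_ofReal ?_
      exact (measurable_lnpdf.comp ((measurable_id.sub_const _).mul_const _)).const_mul _
    have h_le1 : μt E.1 ≤ μ0 E.1 + ENNReal.ofReal (t * IH) := by
      rw [hB, hA]
      calc ∫⁻ y in E.1, ENNReal.ofReal ((1 - t)⁻¹ * lnpdf ((y - t * a) * (1 - t)⁻¹))
          ≤ ∫⁻ y in E.1, (ENNReal.ofReal (lnpdf y) + ENNReal.ofReal (t * Ha a y)) := by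
            refine lintegral_mono fun y => ?_
            rw [← ENNReal.ofReal_add (lnpdf_nonneg y) (hHnn y)]
            exact ENNReal.ofReal_le_ofReal (by linarith [(hkey y).2])
        _ = (∫⁻ y in E.1, ENNReal.ofReal (lnpdf y))
            + ∫⁻ y in E.1, ENNReal.ofReal (t * Ha a y) := lintegral_add_left hmeasF _
        _ ≤ (∫⁻ y in E.1, ENNReal.ofReal (lnpdf y)) + ∫⁻ y, ENNReal.ofReal (t * Ha a y) := by
            gcongr
            exact Measure.restrict_le_self
        _ = _ := by rw [hTint]
    have h_le2 : μ0 E.1 ≤ μt E.1 + ENNReal.ofReal (t * IH) := by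
      rw [hB, hA]
      calc ∫⁻ y in E.1, ENNReal.ofReal (lnpdf y)
          ≤ ∫⁻ y in E.1, (ENNReal.ofReal ((1 - t)⁻¹ * lnpdf ((y - t * a) * (1 - t)⁻¹))
              + ENNReal.ofReal (t * Ha a y)) := by
            refine lintegral_mono fun y => ?_
            rw [← ENNReal.ofReal_add (mul_nonneg (inv_nonneg.mpr (by linarith)) (lnpdf_nonneg _)) (hHnn y)]
            exact ENNReal.ofReal_le_ofReal (by linarith [(hkey y).1])
        _ = (∫⁻ y in E.1, ENNReal.ofReal ((1 - t)⁻¹ * lnpdf ((y - t * a) * (1 - t)⁻¹)))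
            + ∫⁻ y in E.1, ENNReal.ofReal (t * Ha a y) := lintegral_add_left hmeasG _
        _ ≤ _ + ∫⁻ y, ENNReal.ofReal (t * Ha a y) := by
            gcongr
            exact Measure.restrict_le_self
        _ = _ := by rw [hTint]
    have r1 : (μt E.1).toReal ≤ (μ0 E.1).toReal + t * IH := by
      have h := ENNReal.toReal_mono (by finiteness) h_le1
      rwa [ENNReal.toReal_add (measure_ne_top _ _) ENNReal.ofReal_ne_top,
        ENNReal.toReal_ofReal (mul_nonneg ht0 hIH0)] at h
    have r2 : (μ0 E.1).toReal ≤ (μt E.1).toReal + t * IH := by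
      have h := ENNReal.toReal_mono (by finiteness) h_le2
      rwa [ENNReal.toReal_add (measure_ne_top _ _) ENNReal.ofReal_ne_top,
        ENNReal.toReal_ofReal (mul_nonneg ht0 hIH0)] at h
    rw [abs_sub_le_iff]
    constructor <;> nlinarith
  · -- crude bound for t > 1/2
    push_neg at hhalf
    have e1 : (μt E.1).toReal ≤ 1 := by
      have h := ENNReal.toReal_mono ENNReal.one_ne_top (prob_le_one (μ := μt) (s := E.1))
      simpa using h
    have e2 : (μ0 E.1).toReal ≤ 1 := by
      have h := ENNReal.toReal_mono ENNReal.one_ne_top (prob_le_one (μ := μ0) (s := E.1))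
      simpa using h
    have e3 : 0 ≤ (μt E.1).toReal := ENNReal.toReal_nonneg
    have e4 : 0 ≤ (μ0 E.1).toReal := ENNReal.toReal_nonneg
    rw [abs_sub_le_iff]
    constructor <;> nlinarith
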